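/- For any integers n, r ≥ 2, there exists a 2-connected multigraph G with |V(G)| = 2n and Δ(G) = r such that G admits an interval (1 + n(r−1))-coloring, and moreover W(G) = 1 + n(r−1), i.e., no interval coloring of G uses more colors. -/

import Mathlib

/-- A finite loopless multigraph: an edge-indexed family of unordered pairs of
vertices, none of which is a loop. -/
structure Multigraph (V E : Type*) where
  /-- the endpoints of an edge -/
  ends : E → Sym2 V
  loopless : ∀ e, ¬ (ends e).IsDiag

namespace Multigraph

variable {V E : Type*} (G : Multigraph V E)

/-- `v` is an endpoint of `e`. -/
def Inc (v : V) (e : E) : Prop := v ∈ G.ends e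

/-- The degree of a vertex: the number of edges incident to it. -/
noncomputable def degree (v : V) : ℕ := Nat.card {e : E // G.Inc v e}

/-- The maximum degree `Δ(G)`. -/
noncomputable def maxDegree : ℕ := sSup (Set.range G.degree)

/-- Two vertices are adjacent if some edge joins them. -/
def Adj (a b : V) : Prop := ∃ e, G.ends e = s(a, b)

/-- `G` is connected. -/
def Connected : Prop := Nonempty V ∧ ∀ u w : V, Relation.ReflTransGen G.Adj u w

/-- `G` is 2-connected: it is connected and removing any single vertex leaves it
connected (any two vertices distinct from `v` are joined by a walk avoiding `v`). -/
def TwoConnected : Prop :=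
  G.Connected ∧ ∀ v u w : V, u ≠ v → w ≠ v →
    Relation.ReflTransGen (fun a b => G.Adj a b ∧ a ≠ v ∧ b ≠ v) u w

/-- An interval `t`-coloring of the multigraph `G`: a proper edge coloring with
colors `1,…,t`, each color used at least once, such that the colors on the edges
incident to every vertex form an interval of consecutive integers. -/
def IsIntervalColoring (t : ℕ) (c : E → ℕ) : Prop :=
  (∀ e₁ e₂ : E, e₁ ≠ e₂ → (∃ v, G.Inc v e₁ ∧ G.Inc v e₂) → c e₁ ≠ c e₂) ∧
  (∀ e, c e ∈ Set.Icc 1 t) ∧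
  (∀ i ∈ Set.Icc 1 t, ∃ e, c e = i) ∧
  (∀ (v : V) (i j k : ℕ), (∃ e, G.Inc v e ∧ c e = i) → (∃ e, G.Inc v e ∧ c e = j) →
    i ≤ k → k ≤ j → ∃ e, G.Inc v e ∧ c e = k)

/-- `G` has a cycle of length `n`: `n ≥ 2` distinct vertices and `n` distinct edges
arranged cyclically. -/
def HasCycleOfLength (n : ℕ) : Prop :=
  2 ≤ n ∧ ∃ (f : ZMod n → V) (g : ZMod n → E),
    Function.Injective f ∧ Function.Injective g ∧
    ∀ i : ZMod n, G.ends (g i) = s(f i, f (i + 1))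

end Multigraph

namespace Wit

/-- Edge type of the witness graph: rung bundles (column i, multiplicity r-2),
horizontal edges on two sides, and two extra rung edges at the end columns. -/
abbrev Ed (n r : ℕ) : Type := (Fin n × Fin (r - 2)) ⊕ ((Bool × Fin (n - 1)) ⊕ Bool)

variable {n r : ℕ}

def xcol (hn : 0 < n) (b : Bool) : Fin n := if b then ⟨n - 1, by omega⟩ else ⟨0, hn⟩

def ends0 (hn : 0 < n) : Ed n r → Sym2 (Bool × Fin n)
  | .inl (i, _) => s((false, i), (true, i))
  | .inr (.inl (sd, m)) =>
      s((sd, ⟨m.1, by have := m.2; omega⟩), (sd, ⟨m.1 + 1, by have := m.2; omega⟩))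
  | .inr (.inr b) => s((false, xcol hn b), (true, xcol hn b))

lemma mem_ends0_rung (hn : 0 < n) (sd : Bool) (j : Fin n) (i : Fin n) (k : Fin (r-2)) :
    ((sd, j) ∈ ends0 hn (.inl (i, k))) ↔ j = i := by
  simp only [ends0, Sym2.mem_iff, Prod.mk.injEq]
  cases sd <;> simp

lemma mem_ends0_h (hn : 0 < n) (sd : Bool) (j : Fin n) (sd' : Bool) (m : Fin (n-1)) :
    ((sd, j) ∈ ends0 (r := r) hn (.inr (.inl (sd', m)))) ↔
      sd = sd' ∧ (j.1 = m.1 ∨ j.1 = m.1 + 1) := by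
  simp only [ends0, Sym2.mem_iff, Prod.mk.injEq]
  constructor
  · rintro (⟨h1, h2⟩ | ⟨h1, h2⟩) <;> subst h1 <;> subst h2 <;> simp
  · rintro ⟨rfl, (h | h)⟩
    · left; exact ⟨rfl, Fin.ext h⟩
    · right; exact ⟨rfl, Fin.ext h⟩

lemma mem_ends0_x (hn : 0 < n) (sd : Bool) (j : Fin n) (b : Bool) :
    ((sd, j) ∈ ends0 (r := r) hn (.inr (.inr b))) ↔ j.1 = (if b then n - 1 else 0) := by
  simp only [ends0, Sym2.mem_iff, Prod.mk.injEq]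
  cases sd <;> cases b <;> simp [xcol] <;> exact ⟨fun h => by rw [h], fun h => Fin.ext h⟩

/-- The identification of `Bool × Fin n` with `Fin (2*n)`. -/
def eqv (n : ℕ) : Bool × Fin n ≃ Fin (2 * n) :=
  (Equiv.boolProdEquivSum (Fin n)).trans (finSumFinEquiv.trans (finCongr (by omega)))

/-- The witness multigraph. -/
def Gw (n r : ℕ) (hn : 0 < n) : Multigraph (Fin (2 * n)) (Ed n r) where
  ends e := (ends0 hn e).map (eqv n)
  loopless e := by
    rcases e with ⟨i, k⟩ | ⟨sd, m⟩ | b <;>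
      simp [ends0, Sym2.map_pair_eq, Sym2.mk_isDiag_iff, Prod.ext_iff,
        (eqv n).injective.eq_iff]

lemma inc_iff (hn : 0 < n) (w : Bool × Fin n) (e : Ed n r) :
    (Gw n r hn).Inc (eqv n w) e ↔ w ∈ ends0 hn e := by
  unfold Multigraph.Inc Gw
  simp only [Sym2.mem_map]
  constructor
  · rintro ⟨a, ha, h⟩; rwa [(eqv n).injective h] at ha
  · exact fun h => ⟨w, h, rfl⟩

lemma adj_iff (hn : 0 < n) (a b : Bool × Fin n) :
    (Gw n r hn).Adj (eqv n a) (eqv n b) ↔ ∃ e : Ed n r, ends0 hn e = s(a, b) := by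
  unfold Multigraph.Adj Gw
  constructor
  · rintro ⟨e, he⟩
    refine ⟨e, ?_⟩
    have := congrArg (Sym2.map (eqv n).symm) he
    rw [Sym2.map_map, Sym2.map_pair_eq] at this
    simp only [Equiv.symm_apply_apply] at this
    rw [show ((eqv n).symm ∘ eqv n) = id from funext fun x => by simp, Sym2.map_id, id] at this
    exact this
  · rintro ⟨e, he⟩
    exact ⟨e, by show Sym2.map (eqv n) (ends0 hn e) = _; rw [he, Sym2.map_pair_eq]⟩

end Wit

namespace Wit
variable {n r : ℕ}

lemma card_fin_val_eq (N a : ℕ) (ha : a < N) :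
    Nat.card {m : Fin N // m.1 = a} = 1 := by
  rw [Nat.card_eq_fintype_card, Fintype.card_subtype]
  rw [show Finset.univ.filter (fun m : Fin N => m.1 = a) = {⟨a, ha⟩} from by
    ext m; simp [Fin.ext_iff]]
  simp

lemma card_fin_val_pair (N a b : ℕ) (ha : a < N) (hb : b < N) (hab : a ≠ b) :
    Nat.card {m : Fin N // m.1 = a ∨ m.1 = b} = 2 := by
  rw [Nat.card_eq_fintype_card, Fintype.card_subtype]
  rw [show Finset.univ.filter (fun m : Fin N => m.1 = a ∨ m.1 = b)
      = {⟨a, ha⟩, ⟨b, hb⟩} from by ext m; simp [Fin.ext_iff]]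
  rw [Finset.card_insert_of_notMem (by simp [Fin.ext_iff]; omega)]
  simp

lemma card_bool_eq (x : Bool) (p : Bool → Prop) [DecidablePred p]
    (hp : ∀ b, p b ↔ b = x) : Nat.card {b : Bool // p b} = 1 := by
  rw [Nat.card_congr (Equiv.subtypeEquivRight hp), Nat.card_eq_fintype_card,
    Fintype.card_subtype_eq]

lemma degree_eq (hn : 2 ≤ n) (hr : 2 ≤ r) (w : Bool × Fin n) :
    (Gw n r (by omega)).degree (eqv n w) = r := by
  obtain ⟨sd, j⟩ := w
  have hn0 : 0 < n := by omega
  unfold Multigraph.degree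
  rw [Nat.card_congr (Equiv.subtypeEquivRight (fun e => inc_iff hn0 (sd, j) e))]
  rw [Nat.card_congr (Equiv.subtypeSum), Nat.card_sum,
    Nat.card_congr (Equiv.subtypeSum), Nat.card_sum]
  have hA : Nat.card {p : Fin n × Fin (r-2) // (sd, j) ∈ ends0 hn0 (.inl p)} = r - 2 := by
    rw [Nat.card_congr
      (Equiv.subtypeEquivRight (fun p : Fin n × Fin (r-2) => show _ ↔ j = p.1 from by
        obtain ⟨i, k⟩ := p; exact mem_ends0_rung hn0 sd j i k))]
    refine (Nat.card_congr
      { toFun := fun p => p.1.2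
        invFun := fun k => ⟨(j, k), rfl⟩
        left_inv := ?_
        right_inv := fun k => rfl }).trans (Nat.card_eq_fintype_card.trans (by simp))
    rintro ⟨⟨i, k⟩, h⟩
    cases h
    rfl
  have hB : Nat.card {q : Bool × Fin (n-1) // (sd, j) ∈ ends0 (r := r) hn0 (.inr (.inl q))}
      = Nat.card {m : Fin (n-1) // j.1 = m.1 ∨ j.1 = m.1 + 1} := by
    refine Nat.card_congr
      { toFun := fun q => ⟨q.1.2, ((mem_ends0_h hn0 sd j q.1.1 q.1.2).1 q.2).2⟩
        invFun := fun m => ⟨(sd, m.1), (mem_ends0_h hn0 sd j sd m.1).2 ⟨rfl, m.2⟩⟩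
        left_inv := ?_
        right_inv := fun m => rfl }
    rintro ⟨⟨s', m⟩, hq⟩
    have : sd = s' := ((mem_ends0_h hn0 sd j s' m).1 hq).1
    subst this; rfl
  rw [hA, hB]
  have hC0 : ∀ b : Bool, ((sd, j) ∈ ends0 (r := r) hn0 (.inr (.inr b))) ↔
      (j.1 = if b then n - 1 else 0) := fun b => mem_ends0_x hn0 sd j b
  rcases Nat.lt_or_ge j.1 1 with hj | hj
  · -- j = 0
    have hj0 : j.1 = 0 := by omega
    rw [show Nat.card {m : Fin (n-1) // j.1 = m.1 ∨ j.1 = m.1 + 1}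
        = Nat.card {m : Fin (n-1) // m.1 = 0} from
      Nat.card_congr (Equiv.subtypeEquivRight (fun m => by omega)),
      card_fin_val_eq _ 0 (by omega)]
    rw [card_bool_eq false _ (fun b => by
      rw [hC0 b]; cases b <;> simp <;> omega)]
    omega
  rcases Nat.lt_or_ge j.1 (n-1) with hj2 | hj2
  · -- middle
    rw [show Nat.card {m : Fin (n-1) // j.1 = m.1 ∨ j.1 = m.1 + 1}
        = Nat.card {m : Fin (n-1) // m.1 = j.1 ∨ m.1 = j.1 - 1} from
      Nat.card_congr (Equiv.subtypeEquivRight (fun m => by have := m.2; omega)),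
      card_fin_val_pair _ _ _ (by omega) (by omega) (by omega)]
    rw [show Nat.card {b : Bool // (sd, j) ∈ ends0 (r := r) hn0 (.inr (.inr b))} = 0 from by
      rw [Nat.card_eq_zero]
      left
      refine ⟨fun b => ?_⟩
      have := (hC0 b.1).1 b.2
      cases hb : b.1 <;> rw [hb] at this <;> simp at this <;> omega]
    omega
  · -- j = n - 1
    have hjn : j.1 = n - 1 := by have := j.2; omega
    rw [show Nat.card {m : Fin (n-1) // j.1 = m.1 ∨ j.1 = m.1 + 1}
        = Nat.card {m : Fin (n-1) // m.1 = n - 2} from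
      Nat.card_congr (Equiv.subtypeEquivRight (fun m => by have := m.2; omega)),
      card_fin_val_eq _ _ (by omega)]
    rw [card_bool_eq true _ (fun b => by
      rw [hC0 b]; cases b <;> simp <;> omega)]
    omega

lemma maxDegree_eq (hn : 2 ≤ n) (hr : 2 ≤ r) :
    (Gw n r (by omega : 0 < n)).maxDegree = r := by
  unfold Multigraph.maxDegree
  have : Set.range (Gw n r (by omega : 0 < n)).degree = {r} := by
    ext x
    simp only [Set.mem_range, Set.mem_singleton_iff]
    constructor
    · rintro ⟨v, rfl⟩
      obtain ⟨w, rfl⟩ := (eqv n).surjective v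
      exact degree_eq hn hr w
    · rintro rfl
      exact ⟨eqv n (false, ⟨0, by omega⟩), degree_eq hn hr _⟩
  rw [this, csSup_singleton]

end Wit

namespace Wit
variable {n r : ℕ}

/-- adjacency in the pre-transport world -/
def Adj' (hn : 0 < n) (r : ℕ) (a b : Bool × Fin n) : Prop :=
  ∃ e : Ed n r, ends0 hn e = s(a, b)

lemma Adj'_symm (hn : 0 < n) {a b : Bool × Fin n} (h : Adj' hn r a b) : Adj' hn r b a := by
  obtain ⟨e, he⟩ := h; exact ⟨e, by rw [he, Sym2.eq_swap]⟩

/-- position p on the hamiltonian cycle -/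
def pos (hn : 0 < n) (p : ℕ) : Bool × Fin n :=
  if h : p < n then (false, ⟨p, h⟩) else (true, ⟨2*n-1-p, by omega⟩)

lemma pos_inj (hn : 0 < n) {p q : ℕ} (hp : p < 2*n) (hq : q < 2*n)
    (h : pos hn p = pos hn q) : p = q := by
  unfold pos at h
  split_ifs at h <;> simp [Prod.ext_iff, Fin.ext_iff] at h <;> omega

def posInv (n : ℕ) (w : Bool × Fin n) : ℕ := if w.1 then 2*n-1-w.2.1 else w.2.1

lemma posInv_lt (hn : 0 < n) (w : Bool × Fin n) : posInv n w < 2*n := by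
  obtain ⟨s, j⟩ := w; have := j.2; cases s <;> simp [posInv] <;> omega

lemma pos_posInv (hn : 0 < n) (w : Bool × Fin n) : pos hn (posInv n w) = w := by
  obtain ⟨s, j⟩ := w
  have := j.2
  cases s <;> simp only [posInv, pos] <;> split_ifs <;>
    simp_all [Prod.ext_iff, Fin.ext_iff] <;> omega

lemma adj_pos_succ (hn : 0 < n) (p : ℕ) (hp : p + 1 < 2*n) :
    Adj' hn r (pos hn p) (pos hn (p+1)) := by
  rcases Nat.lt_or_ge (p+1) n with h | h
  · refine ⟨.inr (.inl (false, ⟨p, by omega⟩)), ?_⟩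
    simp only [ends0, pos]
    rw [dif_pos (by omega : p < n), dif_pos h]
  · rcases Nat.eq_or_lt_of_le h with h1 | h1
    · refine ⟨.inr (.inr true), ?_⟩
      simp only [ends0, pos, xcol]
      rw [dif_pos (by omega : p < n), dif_neg (by omega)]
      simp only [if_true]
      congr 2 <;> [skip; skip] <;> simp [Fin.ext_iff] <;> omega
    · refine ⟨.inr (.inl (true, ⟨2*n-2-p, by omega⟩)), ?_⟩
      simp only [ends0, pos]
      rw [dif_neg (by omega : ¬ p < n), dif_neg (by omega)]
      rw [Sym2.eq_swap]
      congr 2 <;> simp [Fin.ext_iff] <;> omega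

lemma adj_pos_wrap (hn : 0 < n) : Adj' hn r (pos hn 0) (pos hn (2*n-1)) := by
  refine ⟨.inr (.inr false), ?_⟩
  simp only [ends0, pos, xcol]
  rw [dif_pos hn, dif_neg (by omega)]
  simp only [if_neg Bool.false_ne_true]
  congr 2 <;> simp [Fin.ext_iff] <;> omega

lemma seg0 (hn : 0 < n) (p₁ : ℕ) :
    ∀ p₂, p₁ ≤ p₂ → p₂ < 2*n →
      Relation.ReflTransGen (Adj' hn r) (pos hn p₁) (pos hn p₂) := by
  intro p₂
  induction p₂ with
  | zero => intro h _; rw [Nat.le_zero.mp h]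
  | succ m ih =>
    intro h hlt
    rcases Nat.eq_or_lt_of_le h with h1 | h1
    · rw [h1]
    · exact Relation.ReflTransGen.tail (ih (by omega) (by omega))
        (adj_pos_succ hn m hlt)

lemma segQ (hn : 0 < n) (q p₁ : ℕ) (hq : q < 2*n) :
    ∀ p₂, p₁ ≤ p₂ → p₂ < 2*n → (∀ p, p₁ ≤ p → p ≤ p₂ → p ≠ q) →
      Relation.ReflTransGen
        (fun a b => Adj' hn r a b ∧ a ≠ pos hn q ∧ b ≠ pos hn q)
        (pos hn p₁) (pos hn p₂) := by
  intro p₂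
  induction p₂ with
  | zero => intro h _ _; rw [Nat.le_zero.mp h]
  | succ m ih =>
    intro h hlt havoid
    rcases Nat.eq_or_lt_of_le h with h1 | h1
    · rw [h1]
    · refine Relation.ReflTransGen.tail (ih (by omega) (by omega)
        (fun p hp1 hp2 => havoid p hp1 (by omega))) ?_
      refine ⟨adj_pos_succ hn m hlt, ?_, ?_⟩
      · exact fun hc => havoid m (by omega) (by omega) (pos_inj hn (by omega) hq hc)
      · exact fun hc => havoid (m+1) (by omega) (by omega) (pos_inj hn hlt hq hc)

end Wit

namespace Wit
variable {n r : ℕ}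

lemma gw_adj (hn : 0 < n) {a b : Bool × Fin n} (h : Adj' hn r a b) :
    (Gw n r hn).Adj (eqv n a) (eqv n b) := (adj_iff hn a b).mpr h

lemma connected (hn : 0 < n) : (Gw n r hn).Connected := by
  constructor
  · exact ⟨⟨0, by omega⟩⟩
  · have key : ∀ p, p < 2*n →
        Relation.ReflTransGen (Gw n r hn).Adj (eqv n (pos hn 0)) (eqv n (pos hn p)) :=
      fun p hp => Relation.ReflTransGen.lift (eqv n) (fun a b h => gw_adj hn h) _ _
        (seg0 hn 0 p (by omega) hp)
    have hsym : Symmetric (Relation.ReflTransGen (Gw n r hn).Adj) := by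
      refine fun x y hxy => @Std.Symm.symm _ _ (@Relation.ReflTransGen.stdSymm _ _ ⟨?_⟩) x y hxy
      rintro a b ⟨e, he⟩
      exact ⟨e, by rw [he, Sym2.eq_swap]⟩
    intro u w
    obtain ⟨u', rfl⟩ := (eqv n).surjective u
    obtain ⟨w', rfl⟩ := (eqv n).surjective w
    have h1 := key (posInv n u') (posInv_lt hn u')
    have h2 := key (posInv n w') (posInv_lt hn w')
    rw [pos_posInv hn] at h1 h2
    exact (hsym h1).trans h2

lemma twoConnected (hn : 0 < n) : (Gw n r hn).TwoConnected := by
  refine ⟨connected hn, ?_⟩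
  intro v u w hu hw
  obtain ⟨v', rfl⟩ := (eqv n).surjective v
  obtain ⟨u', rfl⟩ := (eqv n).surjective u
  obtain ⟨w', rfl⟩ := (eqv n).surjective w
  set q := posInv n v' with hq
  have hqlt : q < 2*n := posInv_lt hn v'
  have hvq : pos hn q = v' := pos_posInv hn v'
  -- the relation in the pre-transport world
  set R : Bool × Fin n → Bool × Fin n → Prop :=
    fun a b => Adj' hn r a b ∧ a ≠ pos hn q ∧ b ≠ pos hn q with hR
  have hRsym : Symmetric (Relation.ReflTransGen R) := by
    refine fun x y hxy => @Std.Symm.symm _ _ (@Relation.ReflTransGen.stdSymm _ _ ⟨?_⟩) x y hxy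
    rintro a b ⟨hab, ha, hb⟩
    exact ⟨Adj'_symm hn hab, hb, ha⟩
  have lift : ∀ {a b}, Relation.ReflTransGen R a b →
      Relation.ReflTransGen
        (fun a b => (Gw n r hn).Adj a b ∧ a ≠ eqv n v' ∧ b ≠ eqv n v') (eqv n a) (eqv n b) := by
    intro a b h
    refine Relation.ReflTransGen.lift (eqv n) ?_ _ _ h
    rintro x y ⟨hxy, hx, hy⟩
    refine ⟨gw_adj hn hxy, ?_, ?_⟩
    · simp only [ne_eq, (eqv n).injective.eq_iff]; rw [← hvq]; exact hx
    · simp only [ne_eq, (eqv n).injective.eq_iff]; rw [← hvq]; exact hy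
  -- positions of u and w
  have main : ∀ p₁ p₂, p₁ < 2*n → p₂ < 2*n → p₁ ≤ p₂ → p₁ ≠ q → p₂ ≠ q →
      Relation.ReflTransGen R (pos hn p₁) (pos hn p₂) := by
    intro p₁ p₂ h1 h2 hle hne1 hne2
    rcases Nat.lt_or_ge q p₁ with hcase | hcase
    · exact segQ hn q p₁ hqlt p₂ hle h2 (fun p hp1 _ => by omega)
    rcases Nat.lt_or_ge q p₂ with hcase2 | hcase2
    · -- p₁ < q < p₂ : go around through the wrap edge
      have hA : Relation.ReflTransGen R (pos hn 0) (pos hn p₁) :=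
        segQ hn q 0 hqlt p₁ (by omega) (by omega) (fun p _ hp2 => by omega)
      have hB : Relation.ReflTransGen R (pos hn p₂) (pos hn (2*n-1)) :=
        segQ hn q p₂ hqlt (2*n-1) (by omega) (by omega) (fun p hp1 _ => by omega)
      have hwrap : R (pos hn 0) (pos hn (2*n-1)) := by
        refine ⟨adj_pos_wrap hn, ?_, ?_⟩
        · exact fun hc => absurd (pos_inj hn (by omega) hqlt hc) (by omega)
        · exact fun hc => absurd (pos_inj hn (by omega) hqlt hc) (by omega)
      exact ((hRsym hA).trans (Relation.ReflTransGen.single hwrap)).trans (hRsym hB)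
    · -- q < p₁ impossible here; this branch: p₂ ≤ q, so segment avoids q
      exact segQ hn q p₁ hqlt p₂ hle h2 (fun p _ hp2 => by omega)
  have hu' : posInv n u' ≠ q := by
    intro hc
    apply hu
    rw [← pos_posInv hn u', hc, hvq]
  have hw' : posInv n w' ≠ q := by
    intro hc
    apply hw
    rw [← pos_posInv hn w', hc, hvq]
  rcases le_total (posInv n u') (posInv n w') with hle | hle
  · have := main _ _ (posInv_lt hn u') (posInv_lt hn w') hle hu' hw'
    rw [pos_posInv, pos_posInv] at this
    exact lift this
  · have := main _ _ (posInv_lt hn w') (posInv_lt hn u') hle hw' hu'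
    rw [pos_posInv, pos_posInv] at this
    exact lift (hRsym this)

end Wit

namespace Wit
variable {n r : ℕ}


/-- split `m * d` as `(m-1) * d + d` -/
lemma nsplit (d : ℕ) {m : ℕ} (hm : 1 ≤ m) : m * d = (m-1) * d + d := by
  have h2 : d ≤ m * d := Nat.le_mul_of_pos_left d (by omega)
  have h3 : (m-1) * d = m * d - d := by
    rw [Nat.sub_mul, Nat.one_mul]
  omega

/-- the interval coloring achieving `1 + n*(r-1)` -/
def cw (n r : ℕ) : Ed n r → ℕ
  | .inl (i, k) => i.1 * (r-1) + 2 + k.1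
  | .inr (.inl (_, m)) => (m.1 + 1) * (r-1) + 1
  | .inr (.inr b) => if b then n * (r-1) + 1 else 1

/-- spectrum of the vertex (sd, j): exactly the interval [j(r-1)+1, j(r-1)+r] -/
lemma spec (hn : 2 ≤ n) (hr : 2 ≤ r) (sd : Bool) (j : Fin n) (x : ℕ) :
    (∃ e : Ed n r, (sd, j) ∈ ends0 (by omega : 0 < n) e ∧ cw n r e = x) ↔
      (j.1 * (r-1) + 1 ≤ x ∧ x ≤ j.1 * (r-1) + r) := by
  have hn0 : 0 < n := by omega
  constructor
  · rintro ⟨e, he, rfl⟩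
    rcases e with ⟨i, k⟩ | ⟨sd', m⟩ | b
    · rw [mem_ends0_rung] at he
      subst he
      have := k.2
      simp only [cw]
      omega
    · rw [mem_ends0_h] at he
      have hm := m.2
      simp only [cw]
      rcases he.2 with h | h
      · rw [h, Nat.succ_mul]; omega
      · rw [← h]; omega
    · rw [mem_ends0_x] at he
      cases b <;> simp only [cw, if_true, if_false] <;> simp at he
      · rw [he]; simp; omega
      · rw [he]
        have := nsplit (r-1) (show 1 ≤ n by omega)
        omega
  · rintro ⟨h1, h2⟩
    rcases Nat.eq_or_lt_of_le h1 with hlo | hlo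
    · -- x = j(r-1)+1 : the least color
      rcases Nat.eq_zero_or_pos j.1 with hj | hj
      · refine ⟨.inr (.inr false), by rw [mem_ends0_x]; simp [hj], ?_⟩
        simp only [cw, if_neg Bool.false_ne_true]
        rw [hj] at hlo
        simpa using hlo
      · refine ⟨.inr (.inl (sd, ⟨j.1 - 1, by have := j.2; omega⟩)), ?_, ?_⟩
        · rw [mem_ends0_h]
          exact ⟨rfl, Or.inr (show j.1 = j.1 - 1 + 1 by omega)⟩
        · simp only [cw]; rw [show j.1 - 1 + 1 = j.1 from by omega]; omega
    rcases Nat.eq_or_lt_of_le h2 with hhi | hhi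
    · -- x = j(r-1)+r : the largest color
      rcases Nat.lt_or_ge j.1 (n-1) with hj | hj
      · refine ⟨.inr (.inl (sd, ⟨j.1, by omega⟩)), ?_, ?_⟩
        · rw [mem_ends0_h]; exact ⟨rfl, Or.inl rfl⟩
        · simp only [cw]; rw [Nat.succ_mul]; omega
      · have hj' : j.1 = n - 1 := by have := j.2; omega
        refine ⟨.inr (.inr true), by rw [mem_ends0_x]; simp [hj'], ?_⟩
        simp only [cw, if_true]
        have := nsplit (r-1) (show 1 ≤ n by omega)
        rw [hhi, hj']
        omega
    · -- a rung color
      refine ⟨.inl (j, ⟨x - (j.1 * (r-1)) - 2, by omega⟩), ?_, ?_⟩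
      · rw [mem_ends0_rung]
      · simp only [cw]; omega

end Wit

namespace Wit
variable {n r : ℕ}

@[simp] lemma cw_xf : cw n r (.inr (.inr false)) = 1 := rfl
@[simp] lemma cw_xt : cw n r (.inr (.inr true)) = n * (r-1) + 1 := rfl

lemma cw_proper (hn : 2 ≤ n) (hr : 2 ≤ r) :
    ∀ e₁ e₂ : Ed n r, e₁ ≠ e₂ →
      (∃ v, (Gw n r (by omega : 0 < n)).Inc v e₁ ∧ (Gw n r (by omega : 0 < n)).Inc v e₂) →
      cw n r e₁ ≠ cw n r e₂ := by
  have hn0 : 0 < n := by omega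
  rintro e₁ e₂ hne ⟨v, h1, h2⟩
  obtain ⟨w, rfl⟩ := (eqv n).surjective v
  obtain ⟨sd, j⟩ := w
  rw [inc_iff] at h1 h2
  have hns := nsplit (r-1) (show 1 ≤ n by omega)
  rcases e₁ with ⟨i₁, k₁⟩ | ⟨s₁, m₁⟩ | b₁ <;> rcases e₂ with ⟨i₂, k₂⟩ | ⟨s₂, m₂⟩ | b₂
  · -- rung rung
    rw [mem_ends0_rung] at h1 h2
    subst h1; subst h2
    have : k₁ ≠ k₂ := fun hc => hne (by rw [hc])
    simp only [cw]
    have : k₁.1 ≠ k₂.1 := fun hc => this (Fin.ext hc)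
    omega
  · -- rung h
    rw [mem_ends0_rung] at h1; rw [mem_ends0_h] at h2
    subst h1
    have hk := k₁.2
    simp only [cw]
    rcases h2.2 with h | h
    · rw [h, Nat.succ_mul]; omega
    · rw [h, Nat.succ_mul]; omega
  · -- rung x
    rw [mem_ends0_rung] at h1; rw [mem_ends0_x] at h2
    subst h1
    have hk := k₁.2
    cases b₂
    · rw [cw_xf]; simp only [cw]; simp at h2; rw [h2]; omega
    · rw [cw_xt]; simp only [cw]; simp at h2; rw [h2]; omega
  · -- h rung
    rw [mem_ends0_h] at h1; rw [mem_ends0_rung] at h2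
    subst h2
    have hk := k₂.2
    simp only [cw]
    rcases h1.2 with h | h
    · rw [h, Nat.succ_mul]; omega
    · rw [h, Nat.succ_mul]; omega
  · -- h h
    rw [mem_ends0_h] at h1 h2
    obtain ⟨rfl, hm1⟩ := h1
    obtain ⟨heq, hm2⟩ := h2
    have hmm : m₁.1 ≠ m₂.1 := by
      intro hc
      exact hne (by rw [← heq, Fin.ext hc])
    simp only [cw]
    intro hc
    have := Nat.eq_of_mul_eq_mul_right (show 0 < r - 1 by omega)
      (show (m₁.1 + 1) * (r-1) = (m₂.1+1) * (r-1) by omega)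
    omega
  · -- h x
    rw [mem_ends0_h] at h1; rw [mem_ends0_x] at h2
    obtain ⟨rfl, hm⟩ := h1
    have hmlt := m₁.2
    cases b₂
    · rw [cw_xf]; simp only [cw]; simp at h2
      have : m₁.1 = 0 := by omega
      rw [this]; omega
    · rw [cw_xt]; simp only [cw]; simp at h2
      have : m₁.1 + 1 = n - 1 := by omega
      rw [this]; omega
  · -- x rung
    rw [mem_ends0_x] at h1; rw [mem_ends0_rung] at h2
    subst h2
    have hk := k₂.2
    cases b₁
    · rw [cw_xf]; simp only [cw]; simp at h1; rw [h1]; omega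
    · rw [cw_xt]; simp only [cw]; simp at h1; rw [h1]; omega
  · -- x h
    rw [mem_ends0_x] at h1; rw [mem_ends0_h] at h2
    obtain ⟨rfl, hm⟩ := h2
    have hmlt := m₂.2
    cases b₁
    · rw [cw_xf]; simp only [cw]; simp at h1
      have : m₂.1 = 0 := by omega
      rw [this]; omega
    · rw [cw_xt]; simp only [cw]; simp at h1
      have : m₂.1 + 1 = n - 1 := by omega
      rw [this]; omega
  · -- x x
    rw [mem_ends0_x] at h1; rw [mem_ends0_x] at h2
    cases b₁ <;> cases b₂ <;> simp at h1 h2 <;>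
      first
        | exact absurd rfl hne
        | (exfalso; omega)

lemma cw_bounds (hn : 2 ≤ n) (hr : 2 ≤ r) (e : Ed n r) :
    1 ≤ cw n r e ∧ cw n r e ≤ n * (r-1) + 1 := by
  have hns := nsplit (r-1) (show 1 ≤ n by omega)
  rcases e with ⟨i, k⟩ | ⟨s, m⟩ | b
  · have hk := k.2
    have hi : i.1 ≤ n - 1 := by have := i.2; omega
    have := Nat.mul_le_mul_right (r-1) hi
    simp only [cw]
    omega
  · have hm : m.1 + 1 ≤ n - 1 := by have := m.2; omega
    have := Nat.mul_le_mul_right (r-1) hm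
    simp only [cw]
    omega
  · cases b
    · rw [cw_xf]; omega
    · rw [cw_xt]; omega

lemma cw_surj (hn : 2 ≤ n) (hr : 2 ≤ r) (x : ℕ) (h1 : 1 ≤ x) (h2 : x ≤ n * (r-1) + 1) :
    ∃ e : Ed n r, cw n r e = x := by
  have hn0 : 0 < n := by omega
  have hns := nsplit (r-1) (show 1 ≤ n by omega)
  set q := (x - 1) / (r - 1) with hq
  have hdm := Nat.div_add_mod (x-1) (r-1)
  rw [← hq] at hdm
  have hmod : (x-1) % (r-1) < r - 1 := Nat.mod_lt _ (by omega)
  have hcomm : (r-1) * q = q * (r-1) := Nat.mul_comm _ _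
  rcases Nat.lt_or_ge q n with hqn | hqn
  · have hspec := (spec hn hr false ⟨q, hqn⟩ x).mpr
      (show q * (r-1) + 1 ≤ x ∧ x ≤ q * (r-1) + r by omega)
    obtain ⟨e, _, he⟩ := hspec
    exact ⟨e, he⟩
  · -- q ≥ n : x must be in the top column's spectrum
    have hmul := Nat.mul_le_mul_right (r-1) hqn
    have hcomm2 : (r-1) * n = n * (r-1) := Nat.mul_comm _ _
    have hspec := (spec hn hr false ⟨n-1, by omega⟩ x).mpr
      (show (n-1) * (r-1) + 1 ≤ x ∧ x ≤ (n-1) * (r-1) + r by omega)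
    obtain ⟨e, _, he⟩ := hspec
    exact ⟨e, he⟩

lemma cw_isInterval (hn : 2 ≤ n) (hr : 2 ≤ r) :
    (Gw n r (by omega : 0 < n)).IsIntervalColoring (1 + n * (r - 1)) (cw n r) := by
  have hn0 : 0 < n := by omega
  refine ⟨cw_proper hn hr, ?_, ?_, ?_⟩
  · intro e
    have := cw_bounds hn hr e
    simp only [Set.mem_Icc]
    omega
  · intro i hi
    simp only [Set.mem_Icc] at hi
    exact cw_surj hn hr i hi.1 (by omega)
  · intro v i j k hi hj hik hkj
    obtain ⟨w, rfl⟩ := (eqv n).surjective v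
    obtain ⟨sd, jj⟩ := w
    simp only [inc_iff] at hi hj ⊢
    rw [spec hn hr] at hi hj ⊢
    omega

end Wit

namespace Wit
variable {n r : ℕ}

lemma jump (hn : 2 ≤ n) (hr : 2 ≤ r) {t : ℕ} {c : Ed n r → ℕ}
    (hc : (Gw n r (by omega : 0 < n)).IsIntervalColoring t c)
    {w : Bool × Fin n} {e₁ e₂ : Ed n r}
    (h1 : w ∈ ends0 (by omega : 0 < n) e₁) (h2 : w ∈ ends0 (by omega : 0 < n) e₂) :
    c e₂ ≤ c e₁ + (r - 1) := by
  classical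
  have hn0 : 0 < n := by omega
  rcases le_or_gt (c e₂) (c e₁) with h | h
  · omega
  set a := c e₁
  set b := c e₂
  set v := eqv n w with hv
  have hI1 : (Gw n r hn0).Inc v e₁ := (inc_iff hn0 w e₁).mpr h1
  have hI2 : (Gw n r hn0).Inc v e₂ := (inc_iff hn0 w e₂).mpr h2
  have key : ∀ k : ℕ, ∃ e : Ed n r,
      k ∈ Finset.Icc a b → (Gw n r hn0).Inc v e ∧ c e = k := by
    intro k
    by_cases hk : k ∈ Finset.Icc a b
    · simp only [Finset.mem_Icc] at hk
      obtain ⟨e, he⟩ := hc.2.2.2 v a b k ⟨e₁, hI1, rfl⟩ ⟨e₂, hI2, rfl⟩ hk.1 hk.2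
      exact ⟨e, fun _ => he⟩
    · exact ⟨e₁, fun hk' => absurd hk' hk⟩
  choose F hF using key
  have hcard : (Finset.Icc a b).card ≤
      (Finset.univ.filter (fun e => (Gw n r hn0).Inc v e)).card := by
    apply Finset.card_le_card_of_injOn F
    · intro k hk
      simp only [Finset.coe_filter, Finset.mem_coe, Finset.mem_filter, Finset.mem_univ, true_and, Set.mem_setOf_eq]
      exact ((hF k) hk).1
    · intro k1 hk1 k2 hk2 heq
      have := ((hF k1) hk1).2
      have := ((hF k2) hk2).2
      rw [← ((hF k1) hk1).2, ← ((hF k2) hk2).2, heq]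
  have hdeg : (Finset.univ.filter (fun e => (Gw n r hn0).Inc v e)).card = r := by
    have h := degree_eq hn hr w
    unfold Multigraph.degree at h
    rw [Nat.card_eq_fintype_card, Fintype.card_subtype] at h
    exact h
  rw [Nat.card_Icc, hdeg] at hcard
  omega

variable {t : ℕ} {c : Ed n r → ℕ}

/-- edges with colors within `k*(r-1)` of one another -/
def near (c : Ed n r → ℕ) (e f : Ed n r) (k : ℕ) : Prop :=
  c e ≤ c f + k * (r-1) ∧ c f ≤ c e + k * (r-1)

lemma near_refl (e : Ed n r) (k : ℕ) : near c e e k := ⟨by omega, by omega⟩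

lemma near_symm {e f : Ed n r} {k : ℕ} (h : near c e f k) : near c f e k := ⟨h.2, h.1⟩

lemma near_trans {e f g : Ed n r} {k l : ℕ} (h1 : near c e f k) (h2 : near c f g l) :
    near c e g (k + l) := by
  obtain ⟨a1, a2⟩ := h1
  obtain ⟨b1, b2⟩ := h2
  have : (k + l) * (r-1) = k * (r-1) + l * (r-1) := Nat.add_mul k l (r-1)
  exact ⟨by omega, by omega⟩

lemma near_mono {e f : Ed n r} {k l : ℕ} (hkl : k ≤ l) (h : near c e f k) :
    near c e f l := by
  have := Nat.mul_le_mul_right (r-1) hkl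
  obtain ⟨a1, a2⟩ := h
  exact ⟨by omega, by omega⟩

lemma near_step (hn : 2 ≤ n) (hr : 2 ≤ r) (hc : (Gw n r (by omega : 0 < n)).IsIntervalColoring t c)
    {w : Bool × Fin n} {e f : Ed n r}
    (h1 : w ∈ ends0 (by omega : 0 < n) e) (h2 : w ∈ ends0 (by omega : 0 < n) f) :
    near c e f 1 := by
  have a := jump hn hr hc h1 h2
  have b := jump hn hr hc h2 h1
  exact ⟨by omega, by omega⟩

/-- the horizontal edge at side `sd` between columns `m` and `m+1` -/
def Hh (sd : Bool) (m : ℕ) (hm : m < n - 1) : Ed n r := .inr (.inl (sd, ⟨m, hm⟩))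

lemma mem_Hh_left (hn0 : 0 < n) (sd : Bool) (m : ℕ) (hm : m < n-1) :
    ((sd, ⟨m, by omega⟩) : Bool × Fin n) ∈ ends0 (r := r) hn0 (Hh sd m hm) := by
  rw [Hh, mem_ends0_h]
  exact ⟨rfl, Or.inl rfl⟩

lemma mem_Hh_right (hn0 : 0 < n) (sd : Bool) (m : ℕ) (hm : m < n-1) :
    ((sd, ⟨m+1, by omega⟩) : Bool × Fin n) ∈ ends0 (r := r) hn0 (Hh sd m hm) := by
  rw [Hh, mem_ends0_h]
  exact ⟨rfl, Or.inr rfl⟩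

lemma near_H_chain (hn : 2 ≤ n) (hr : 2 ≤ r) (hc : (Gw n r (by omega : 0 < n)).IsIntervalColoring t c) (sd : Bool)
    (a : ℕ) (ha : a < n-1) :
    ∀ b, a ≤ b → (hb : b < n - 1) → near c (Hh sd a ha) (Hh sd b hb) (b - a) := by
  intro b
  induction b with
  | zero =>
    intro h _
    have : a = 0 := by omega
    subst this
    exact near_refl _ _
  | succ m ih =>
    intro h hb
    rcases Nat.eq_or_lt_of_le h with h1 | h1
    · subst h1; exact near_refl _ _
    · have step : near c (Hh sd m (by omega)) (Hh (r := r) sd (m+1) hb) 1 :=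
        near_step hn hr hc (mem_Hh_right (show 0 < n by omega) sd m (by omega))
          (mem_Hh_left (show 0 < n by omega) sd (m+1) hb)
      have := near_trans (ih (by omega) (by omega)) step
      exact near_mono (by omega) this
end Wit

namespace Wit
variable {n r : ℕ} {t : ℕ} {c : Ed n r → ℕ}

/-- `e` is a vertical edge (a rung or an end edge) at column `i` -/
def IsVert (e : Ed n r) (i : ℕ) : Prop :=
  match e with
  | .inl (i', _) => i'.1 = i
  | .inr (.inl _) => False
  | .inr (.inr b) => (if b then n - 1 else 0) = i

lemma IsVert.lt (hn : 0 < n) {e : Ed n r} {i : ℕ} (h : IsVert e i) : i < n := by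
  rcases e with ⟨i', k⟩ | q | b
  · rw [show i = i'.1 from h.symm]; exact i'.2
  · exact absurd h not_false
  · cases b <;> simp [IsVert] at h <;> omega

lemma IsVert.mem (hn : 0 < n) {e : Ed n r} {i : ℕ} (h : IsVert e i) (sd : Bool) :
    ((sd, ⟨i, h.lt hn⟩) : Bool × Fin n) ∈ ends0 hn e := by
  rcases e with ⟨i', k⟩ | q | b
  · rw [mem_ends0_rung]
    exact Fin.ext h.symm
  · exact absurd h not_false
  · rw [mem_ends0_x]
    cases b <;> simp [IsVert] at h ⊢ <;> omega

lemma isVert_xf (hn : 0 < n) : IsVert (n := n) (r := r) (.inr (.inr false)) 0 := by simp [IsVert]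
lemma isVert_xt (hn : 0 < n) : IsVert (n := n) (r := r) (.inr (.inr true)) (n-1) := by simp [IsVert]

lemma near_vert_left (hn : 2 ≤ n) (hr : 2 ≤ r)
    (hc : (Gw n r (by omega : 0 < n)).IsIntervalColoring t c)
    {e : Ed n r} {i : ℕ} (hv : IsVert e i) (sd : Bool) {m : ℕ} (him : i ≤ m)
    (hm : m < n - 1) : near c e (Hh sd m hm) (m - i + 1) := by
  have hn0 : 0 < n := by omega
  have step : near c e (Hh (r := r) sd i (by omega)) 1 :=
    near_step hn hr hc (hv.mem hn0 sd) (mem_Hh_left hn0 sd i (by omega))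
  have chain := near_H_chain hn hr hc sd i (by omega) m him hm
  exact near_mono (by omega) (near_trans step chain)

lemma near_vert_right (hn : 2 ≤ n) (hr : 2 ≤ r)
    (hc : (Gw n r (by omega : 0 < n)).IsIntervalColoring t c)
    {e : Ed n r} {i : ℕ} (hv : IsVert e i) (sd : Bool) {m : ℕ} (him : m < i)
    (hm : m < n - 1) : near c e (Hh sd m hm) (i - m) := by
  have hn0 : 0 < n := by omega
  have hi : i < n := hv.lt hn0
  have step : near c e (Hh (r := r) sd (i-1) (by omega)) 1 := by
    refine near_step hn hr hc (hv.mem hn0 sd) ?_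
    have h := mem_Hh_right (r := r) hn0 sd (i-1) (by omega)
    have heq : (⟨i - 1 + 1, by omega⟩ : Fin n) = ⟨i, hv.lt hn0⟩ := by
      simp only [Fin.mk.injEq]; omega
    rwa [heq] at h
  have chain := near_H_chain hn hr hc sd m hm (i-1) (by omega) (by omega)
  exact near_mono (by omega) (near_trans step (near_symm chain))

lemma near_vert_vert_le (hn : 2 ≤ n) (hr : 2 ≤ r)
    (hc : (Gw n r (by omega : 0 < n)).IsIntervalColoring t c)
    {e f : Ed n r} {i j : ℕ} (hv : IsVert e i) (hw : IsVert f j) (hij : i ≤ j) :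
    near c e f n := by
  have hn0 : 0 < n := by omega
  rcases Nat.eq_or_lt_of_le hij with h | h
  · subst h
    exact near_mono (by omega)
      (near_step hn hr hc (hv.mem hn0 false) (hw.mem hn0 false))
  · have hj : j < n := hw.lt hn0
    have h1 := near_vert_left hn hr hc hv false (show i ≤ j - 1 by omega)
      (show j - 1 < n - 1 by omega)
    have h2 : near c (Hh (r := r) false (j-1) (by omega)) f 1 := by
      refine near_step hn hr hc ?_ (hw.mem hn0 false)
      have hm := mem_Hh_right (r := r) hn0 false (j-1) (by omega)
      have heq : (⟨j - 1 + 1, by omega⟩ : Fin n) = ⟨j, hw.lt hn0⟩ := by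
        simp only [Fin.mk.injEq]; omega
      rwa [heq] at hm
    exact near_mono (by omega) (near_trans h1 h2)

lemma near_vert_h (hn : 2 ≤ n) (hr : 2 ≤ r)
    (hc : (Gw n r (by omega : 0 < n)).IsIntervalColoring t c)
    {e : Ed n r} {i : ℕ} (hv : IsVert e i) (sd : Bool) (m : ℕ) (hm : m < n - 1) :
    near c e (Hh sd m hm) n := by
  rcases le_or_gt i m with h | h
  · exact near_mono (by omega) (near_vert_left hn hr hc hv sd h hm)
  · exact near_mono (by have := hv.lt (show 0 < n by omega); omega)
      (near_vert_right hn hr hc hv sd h hm)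

lemma near_h_h (hn : 2 ≤ n) (hr : 2 ≤ r)
    (hc : (Gw n r (by omega : 0 < n)).IsIntervalColoring t c)
    (sd sd' : Bool) (a b : ℕ) (ha : a < n-1) (hb : b < n-1) :
    near c (Hh sd a ha) (Hh sd' b hb) n := by
  have hn0 : 0 < n := by omega
  by_cases hss : sd = sd'
  · subst hss
    rcases le_total a b with h | h
    · exact near_mono (by omega) (near_H_chain hn hr hc sd a ha b h hb)
    · exact near_mono (by omega) (near_symm (near_H_chain hn hr hc sd b hb a h ha))
  · rcases le_or_gt (a + b + 2) n with hcase | hcase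
    · -- go around through column 0
      have h1 := near_vert_left hn hr hc (isVert_xf (r := r) hn0) sd
        (Nat.zero_le a) ha
      have h2 := near_vert_left hn hr hc (isVert_xf (r := r) hn0) sd'
        (Nat.zero_le b) hb
      exact near_mono (by omega) (near_trans (near_symm h1) h2)
    · -- go around through column n-1
      have h1 := near_vert_right hn hr hc (isVert_xt (r := r) hn0) sd
        (show a < n - 1 by omega) ha
      have h2 := near_vert_right hn hr hc (isVert_xt (r := r) hn0) sd'
        (show b < n - 1 by omega) hb
      exact near_mono (by omega) (near_trans (near_symm h1) h2)

lemma near_all (hn : 2 ≤ n) (hr : 2 ≤ r)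
    (hc : (Gw n r (by omega : 0 < n)).IsIntervalColoring t c)
    (e f : Ed n r) : near c e f n := by
  have hn0 : 0 < n := by omega
  have classify : ∀ g : Ed n r, (∃ i, IsVert g i) ∨
      (∃ sd m hm, g = Hh (r := r) sd m hm) := by
    intro g
    rcases g with ⟨i', k⟩ | ⟨sd, m⟩ | b
    · exact Or.inl ⟨i'.1, rfl⟩
    · exact Or.inr ⟨sd, m.1, by have := m.2; omega, by simp [Hh]⟩
    · exact Or.inl ⟨if b then n - 1 else 0, by cases b <;> simp [IsVert]⟩
  rcases classify e with ⟨i, hi⟩ | ⟨sd, m, hm, rfl⟩ <;>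
    rcases classify f with ⟨j, hj⟩ | ⟨sd', m', hm', rfl⟩
  · rcases le_total i j with h | h
    · exact near_vert_vert_le hn hr hc hi hj h
    · exact near_symm (near_vert_vert_le hn hr hc hj hi h)
  · exact near_vert_h hn hr hc hi sd' m' hm'
  · exact near_symm (near_vert_h hn hr hc hj sd m hm)
  · exact near_h_h hn hr hc sd sd' m m' hm hm'

lemma upper_bound (hn : 2 ≤ n) (hr : 2 ≤ r) (t : ℕ) (c : Ed n r → ℕ)
    (hc : (Gw n r (by omega : 0 < n)).IsIntervalColoring t c) :
    t ≤ 1 + n * (r - 1) := by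
  rcases Nat.eq_zero_or_pos t with h | h
  · omega
  · obtain ⟨e₁, he₁⟩ := hc.2.2.1 1 (by simp [Set.mem_Icc]; omega)
    obtain ⟨e₂, he₂⟩ := hc.2.2.1 t (by simp [Set.mem_Icc]; omega)
    have := (near_all hn hr hc e₁ e₂).2
    rw [he₁, he₂] at this
    omega

end Wit

/-- For any integers `n, r ≥ 2` there is a 2-connected multigraph `G` with `2n`
vertices and maximum degree `r` which admits an interval `(1 + n(r−1))`-coloring,
and such that every interval `t`-coloring of `G` has `t ≤ 1 + n(r−1)`, i.e.
`W(G) = 1 + n(r−1)`. -/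
theorem stmt10 (n r : ℕ) (hn : 2 ≤ n) (hr : 2 ≤ r) :
    ∃ (E : Type) (_ : Fintype E) (G : Multigraph (Fin (2 * n)) E),
      G.TwoConnected ∧ G.maxDegree = r ∧
      (∃ c : E → ℕ, G.IsIntervalColoring (1 + n * (r - 1)) c) ∧
      (∀ (t : ℕ) (c : E → ℕ), G.IsIntervalColoring t c → t ≤ 1 + n * (r - 1)) := by
  have hn0 : 0 < n := by omega
  exact ⟨Wit.Ed n r, inferInstance, Wit.Gw n r hn0,
    Wit.twoConnected hn0,
    Wit.maxDegree_eq hn hr,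
    ⟨Wit.cw n r, Wit.cw_isInterval hn hr⟩,
    fun t c hc => Wit.upper_bound hn hr t c hc⟩
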